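/- With the Wood–Desargues setup (two circles meeting at J and K, triangle ABC inscribed in the first circle, a, b, c the second intersections of AK, BK, CK with the second circle), suppose lines CA and ca meet at a point 2, and lines AB and ab meet at a point 3. Then the four points A, a, 2, 3 are concyclic. -/

import Mathlib

open Complex

local notation "conj'" => (starRingEnd ℂ)

/-- From `dist` to a complex product equation. -/
lemma dist_to_eq {O z : ℂ} {r : ℝ} (h : dist O z = r) :
    (z - O) * (conj' z - conj' O) = ((r : ℂ))^2 := by
  have h1 : ‖z - O‖ = r := by
    rw [← Complex.dist_eq]; rwa [dist_comm] at h
  have h2 : (z - O) * conj' (z - O) = ((Complex.normSq (z - O) : ℝ) : ℂ) :=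
    (Complex.mul_conj _)
  rw [map_sub] at h2
  rw [h2, ← Complex.sq_norm, h1]
  push_cast
  ring

/-- From a complex product equation to `dist` equality. -/
lemma eq_to_dist {O z z' : ℂ}
    (h : (z - O) * (conj' z - conj' O) = (z' - O) * (conj' z' - conj' O)) :
    dist O z = dist O z' := by
  rw [← map_sub, ← map_sub] at h
  rw [Complex.mul_conj, Complex.mul_conj] at h
  have h2 : Complex.normSq (z - O) = Complex.normSq (z' - O) := by
    exact_mod_cast h
  rw [Complex.dist_eq, Complex.dist_eq, Complex.norm_def, Complex.norm_def]
  rw [show O - z = -(z - O) by ring, show O - z' = -(z' - O) by ring,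
    Complex.normSq_neg, Complex.normSq_neg, h2]

/-- Parametrize a collinear triple. -/
lemma collinear_param {p q z : ℂ} (hpq : p ≠ q) (h : Collinear ℝ ({p, q, z} : Set ℂ)) :
    ∃ t : ℝ, z = p + (t : ℂ) * (q - p) := by
  rw [collinear_iff_exists_forall_eq_smul_vadd] at h
  obtain ⟨p₀, v, hv⟩ := h
  obtain ⟨r1, h1⟩ := hv p (by simp)
  obtain ⟨r2, h2⟩ := hv q (by simp)
  obtain ⟨r3, h3⟩ := hv z (by simp)
  have hr : r2 - r1 ≠ 0 := by
    intro hr0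
    apply hpq
    have : r2 = r1 := by linarith [sub_eq_zero.mp hr0]
    rw [h1, h2, this]
  refine ⟨(r3 - r1) / (r2 - r1), ?_⟩
  have e1 : q - p = ((r2 - r1 : ℝ) : ℂ) * v := by
    rw [h1, h2]
    simp only [vadd_eq_add]
    push_cast
    rw [Complex.real_smul, Complex.real_smul]
    ring
  have e2 : z - p = ((r3 - r1 : ℝ) : ℂ) * v := by
    rw [h1, h3]
    simp only [vadd_eq_add]
    push_cast
    rw [Complex.real_smul, Complex.real_smul]
    ring
  have hz : z = p + ((r3 - r1 : ℝ) : ℂ) * v := by rw [← e2]; ring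
  rw [hz, e1]
  push_cast
  have hrc : ((r2 : ℂ) - r1) ≠ 0 := by
    intro h0
    apply hr
    have : ((r2 - r1 : ℝ) : ℂ) = 0 := by push_cast; exact h0
    exact_mod_cast this
  field_simp

lemma conj_sub_ne {x y : ℂ} (h : x ≠ y) : conj' x - conj' y ≠ 0 := by
  intro h0
  apply sub_ne_zero.mpr h
  have h1 := congrArg conj' h0
  simpa using h1

/-- Three distinct points on a circle give a nonzero "collinearity determinant". -/
lemma l_det {p p' q q' r r' O O' s : ℂ}
    (hp : (p - O) * (p' - O') = s) (hq : (q - O) * (q' - O') = s)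
    (hr : (r - O) * (r' - O') = s)
    (hrp : r ≠ p) (hrq : r ≠ q) (hq' : q' - p' ≠ 0) :
    (q - p) * (r' - p') ≠ (q' - p') * (r - p) := by
  intro hcol
  have E1 : (q - p) * (q' - p') + (q - p) * (p' - O') + (q' - p') * (p - O) = 0 := by
    linear_combination hq - hp
  have E2 : (r - p) * (r' - p') + (r - p) * (p' - O') + (r' - p') * (p - O) = 0 := by
    linear_combination hr - hp
  have he : r - p ≠ 0 := sub_ne_zero.mpr hrp
  have hbr : (r - p) * ((q' - p') * (r - p) + (q - p) * (p' - O') + (q' - p') * (p - O)) = 0 := by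
    linear_combination (q - p) * E2 - ((r - p) + (p - O)) * hcol
  have hbr2 : (q' - p') * (r - p) + (q - p) * (p' - O') + (q' - p') * (p - O) = 0 :=
    (mul_eq_zero.mp hbr).resolve_left he
  have hfin : (q' - p') * ((r - p) - (q - p)) = 0 := by
    linear_combination hbr2 - E1
  have hrqe := (mul_eq_zero.mp hfin).resolve_left hq'
  exact hrq (by linear_combination hrqe)

/-- Two circles through three "noncollinear" points have the same center. -/
lemma l_center {p p' q q' r r' O O' W W' s t : ℂ}
    (hpO : (p - O) * (p' - O') = s) (hqO : (q - O) * (q' - O') = s)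
    (hrO : (r - O) * (r' - O') = s)
    (hpW : (p - W) * (p' - W') = t) (hqW : (q - W) * (q' - W') = t)
    (hrW : (r - W) * (r' - W') = t)
    (hdet : (q - p) * (r' - p') ≠ (q' - p') * (r - p)) : O = W := by
  have L1 : (q' - p') * (W - O) + (q - p) * (W' - O') = 0 := by
    linear_combination hqO - hpO - hqW + hpW
  have L2 : (r' - p') * (W - O) + (r - p) * (W' - O') = 0 := by
    linear_combination hrO - hpO - hrW + hpW
  have key : (W - O) * ((q' - p') * (r - p) - (r' - p') * (q - p)) = 0 := by
    linear_combination (r - p) * L1 - (q - p) * L2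
  have hne : (q' - p') * (r - p) - (r' - p') * (q - p) ≠ 0 := by
    intro h0
    exact hdet (by linear_combination -h0)
  have hfin := (mul_eq_zero.mp key).resolve_right hne
  linear_combination -hfin

/-- The spiral-similarity identity for the Wood configuration. -/
lemma l_spiral {A A' B B' J J' K K' O1 O1' O2 O2' a b s tA tB : ℂ}
    (gA : (A - O1) * (A' - O1') = s) (gB : (B - O1) * (B' - O1') = s)
    (gJ : (J - O1) * (J' - O1') = s) (gK : (K - O1) * (K' - O1') = s)
    (G4 : (J - O2) * (J' - O2') = (K - O2) * (K' - O2'))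
    (ea : a = K + tA * (A - K)) (eb : b = K + tB * (B - K))
    (EA : tA * ((A - K) * (A' - K')) + (A - K) * (K' - O2') + (A' - K') * (K - O2) = 0)
    (EB : tB * ((B - K) * (B' - K')) + (B - K) * (K' - O2') + (B' - K') * (K - O2) = 0)
    (hKJ' : K' - J' ≠ 0) (hAK' : A' - K' ≠ 0) (hBK' : B' - K' ≠ 0) :
    (a - J) * (B - J) = (b - J) * (A - J) := by
  have H : ((K' - J') * ((A' - K') * (B' - K'))) * ((a - J) * (B - J)) =
      ((K' - J') * ((A' - K') * (B' - K'))) * ((b - J) * (A - J)) := by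
    linear_combination
      ((K' - J') * (A' - K') * (B' - K') * (B - J)) * ea
      - ((K' - J') * (A' - K') * (B' - K') * (A - J)) * eb
      + ((K' - J') * (B - J) * (B' - K')) * EA
      - ((K' - J') * (A - J) * (A' - K')) * EB
      - ((A - B) * (A' - K') * (B' - K')) * G4
      + (K' - O2') * ((J' * K - J * K' - B' * K + B' * J + B * K' - B * J') * gA
        + (-(J' * K) + J * K' + A' * K - A' * J - A * K' + A * J') * gB
        + (B' * K - B * K' - A' * K + A' * B + A * K' - A * B') * gJ
        + (-(B' * J) + B * J' + A' * J - A' * B - A * J' + A * B') * gK)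
  exact mul_left_cancel₀ (mul_ne_zero hKJ' (mul_ne_zero hAK' hBK')) H

/-- `wA` lies on the circle through `A`, `wA`, `0` with the explicit center. -/
lemma l_circ3 {A A' w w' : ℂ} (hww : w - w' ≠ 0) :
    (w * A - A * w * (1 - w') / (w - w')) * (w' * A' - A' * w' * (1 - w) / (w' - w)) =
    (A - A * w * (1 - w') / (w - w')) * (A' - A' * w' * (1 - w) / (w' - w)) := by
  have hww2 : w' - w ≠ 0 := fun h => hww (by linear_combination -h)
  field_simp
  ring

/-- The key lemma: the line intersection point lies on the circle through `A`, `wA`, `0`. -/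
lemma l_key {A A' C C' w w' u P P' : ℂ}
    (hCA : C - A ≠ 0) (hCA' : C' - A' ≠ 0) (hww : w - w' ≠ 0)
    (hP : P = w * C - u * (w * (C - A))) (hP' : P' = w' * C' - u * (w' * (C' - A')))
    (hcross : (P - C) * (A' - C') = (P' - C') * (A - C)) :
    (P - A * w * (1 - w') / (w - w')) * (P' - A' * w' * (1 - w) / (w' - w)) =
    (A - A * w * (1 - w') / (w - w')) * (A' - A' * w' * (1 - w) / (w' - w)) := by
  have hww2 : w' - w ≠ 0 := fun h => hww (by linear_combination -h)
  rw [hP, hP'] at hcross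
  have hu : u * ((C - A) * ((C' - A') * (w - w'))) =
      (w' - 1) * C' * (A - C) - (w - 1) * C * (A' - C') := by
    linear_combination hcross
  have hS : (C - A) * ((C' - A') * (w - w')) ≠ 0 :=
    mul_ne_zero hCA (mul_ne_zero hCA' hww)
  have huv : u = ((w' - 1) * C' * (A - C) - (w - 1) * C * (A' - C')) /
      ((C - A) * ((C' - A') * (w - w'))) := by
    rw [eq_div_iff hS]; exact hu
  rw [hP, hP', huv]
  field_simp
  ring
/-- Wood's theorem: in the Wood–Desargues configuration (two circles meeting at `J, K`,
triangle `ABC` on the first circle, `a, b, c` the second intersections of `AK, BK, CK`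
with the second circle), if `2 = CA ∩ ca` and `3 = AB ∩ ab`, then `A, a, 2, 3` are
concyclic. -/
theorem stmt_6 (O₁ O₂ J K A B C a b c P2 P3 : ℂ) (r₁ r₂ : ℝ)
    (hO : O₁ ≠ O₂) (hJK : J ≠ K)
    (hJ1 : dist O₁ J = r₁) (hK1 : dist O₁ K = r₁)
    (hJ2 : dist O₂ J = r₂) (hK2 : dist O₂ K = r₂)
    (hA : dist O₁ A = r₁) (hB : dist O₁ B = r₁) (hC : dist O₁ C = r₁)
    (hncol : ¬ Collinear ℝ ({A, B, C} : Set ℂ))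
    (hAK : A ≠ K) (hBK : B ≠ K) (hCK : C ≠ K)
    (hAJ : A ≠ J) (hBJ : B ≠ J) (hCJ : C ≠ J)
    (ha : dist O₂ a = r₂) (hb : dist O₂ b = r₂) (hc : dist O₂ c = r₂)
    (haK : a ≠ K) (hbK : b ≠ K) (hcK : c ≠ K)
    (hacol : Collinear ℝ ({A, K, a} : Set ℂ))
    (hbcol : Collinear ℝ ({B, K, b} : Set ℂ))
    (hccol : Collinear ℝ ({C, K, c} : Set ℂ))
    (h2 : Collinear ℝ ({C, A, P2} : Set ℂ) ∧ Collinear ℝ ({c, a, P2} : Set ℂ))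
    (h3 : Collinear ℝ ({A, B, P3} : Set ℂ) ∧ Collinear ℝ ({a, b, P3} : Set ℂ)) :
    ∃ (O : ℂ) (r : ℝ), dist O A = r ∧ dist O a = r ∧ dist O P2 = r ∧ dist O P3 = r := by
  -- distinctness of triangle vertices
  have hAB : A ≠ B := by
    rintro rfl
    exact hncol ((collinear_pair ℝ A C).subset (by intro x hx; simp at hx ⊢; tauto))
  have hAC : A ≠ C := by
    rintro rfl
    exact hncol ((collinear_pair ℝ A B).subset (by intro x hx; simp at hx ⊢; tauto))
  -- circle equations
  have cJ1 := dist_to_eq hJ1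
  have cK1 := dist_to_eq hK1
  have cA1 := dist_to_eq hA
  have cB1 := dist_to_eq hB
  have cC1 := dist_to_eq hC
  have cJ2 := dist_to_eq hJ2
  have cK2 := dist_to_eq hK2
  have ca2 := dist_to_eq ha
  have cb2 := dist_to_eq hb
  have cc2 := dist_to_eq hc
  -- collinearity parametrizations (base K)
  obtain ⟨tA, ea⟩ := collinear_param (Ne.symm hAK)
    (show Collinear ℝ ({K, A, a} : Set ℂ) by rwa [Set.insert_comm] at hacol)
  obtain ⟨tB, eb⟩ := collinear_param (Ne.symm hBK)
    (show Collinear ℝ ({K, B, b} : Set ℂ) by rwa [Set.insert_comm] at hbcol)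
  obtain ⟨tC, ec⟩ := collinear_param (Ne.symm hCK)
    (show Collinear ℝ ({K, C, c} : Set ℂ) by rwa [Set.insert_comm] at hccol)
  -- conjugated parametrizations
  have ea' : conj' a = conj' K + (tA : ℂ) * (conj' A - conj' K) := by
    have h1 := congrArg conj' ea; simpa using h1
  have eb' : conj' b = conj' K + (tB : ℂ) * (conj' B - conj' K) := by
    have h1 := congrArg conj' eb; simpa using h1
  have ec' : conj' c = conj' K + (tC : ℂ) * (conj' C - conj' K) := by
    have h1 := congrArg conj' ec; simpa using h1
  -- the parameters are nonzero
  have htA : (tA : ℂ) ≠ 0 := by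
    intro h0; apply haK; rw [ea, h0]; ring
  have htB : (tB : ℂ) ≠ 0 := by
    intro h0; apply hbK; rw [eb, h0]; ring
  have htC : (tC : ℂ) ≠ 0 := by
    intro h0; apply hcK; rw [ec, h0]; ring
  -- circle 2 equations relative to K
  have caK : (a - O₂) * (conj' a - conj' O₂) = (K - O₂) * (conj' K - conj' O₂) :=
    ca2.trans cK2.symm
  have cbK : (b - O₂) * (conj' b - conj' O₂) = (K - O₂) * (conj' K - conj' O₂) :=
    cb2.trans cK2.symm
  have ccK : (c - O₂) * (conj' c - conj' O₂) = (K - O₂) * (conj' K - conj' O₂) :=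
    cc2.trans cK2.symm
  -- the EA equations
  have EA : (tA : ℂ) * ((A - K) * (conj' A - conj' K)) + (A - K) * (conj' K - conj' O₂)
      + (conj' A - conj' K) * (K - O₂) = 0 := by
    refine (mul_eq_zero.mp (show (tA : ℂ) * _ = 0 from ?_)).resolve_left htA
    linear_combination caK - (conj' a - conj' O₂) * ea - (K + (tA : ℂ) * (A - K) - O₂) * ea'
  have EB : (tB : ℂ) * ((B - K) * (conj' B - conj' K)) + (B - K) * (conj' K - conj' O₂)
      + (conj' B - conj' K) * (K - O₂) = 0 := by
    refine (mul_eq_zero.mp (show (tB : ℂ) * _ = 0 from ?_)).resolve_left htB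
    linear_combination cbK - (conj' b - conj' O₂) * eb - (K + (tB : ℂ) * (B - K) - O₂) * eb'
  have EC : (tC : ℂ) * ((C - K) * (conj' C - conj' K)) + (C - K) * (conj' K - conj' O₂)
      + (conj' C - conj' K) * (K - O₂) = 0 := by
    refine (mul_eq_zero.mp (show (tC : ℂ) * _ = 0 from ?_)).resolve_left htC
    linear_combination ccK - (conj' c - conj' O₂) * ec - (K + (tC : ℂ) * (C - K) - O₂) * ec'
  -- spiral similarity equations
  have G4 : (J - O₂) * (conj' J - conj' O₂) = (K - O₂) * (conj' K - conj' O₂) :=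
    cJ2.trans cK2.symm
  have hKJ' : conj' K - conj' J ≠ 0 := conj_sub_ne (Ne.symm hJK)
  have spirB : (a - J) * (B - J) = (b - J) * (A - J) :=
    l_spiral cA1 cB1 cJ1 cK1 G4 ea eb EA EB hKJ' (conj_sub_ne hAK) (conj_sub_ne hBK)
  have spirC : (a - J) * (C - J) = (c - J) * (A - J) :=
    l_spiral cA1 cC1 cJ1 cK1 G4 ea ec EA EC hKJ' (conj_sub_ne hAK) (conj_sub_ne hCK)
  have hAJs : A - J ≠ 0 := sub_ne_zero.mpr hAJ
  set w : ℂ := (a - J) / (A - J) with hw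
  have hwA : a - J = w * (A - J) := (div_mul_cancel₀ _ hAJs).symm
  have hwB : b - J = w * (B - J) := by
    rw [hw, div_mul_eq_mul_div, eq_div_iff hAJs]
    linear_combination -spirB
  have hwC : c - J = w * (C - J) := by
    rw [hw, div_mul_eq_mul_div, eq_div_iff hAJs]
    linear_combination -spirC
  have hwA' : conj' a - conj' J = conj' w * (conj' A - conj' J) := by
    have h1 := congrArg conj' hwA; simpa using h1
  have hwB' : conj' b - conj' J = conj' w * (conj' B - conj' J) := by
    have h1 := congrArg conj' hwB; simpa using h1
  have hwC' : conj' c - conj' J = conj' w * (conj' C - conj' J) := by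
    have h1 := congrArg conj' hwC; simpa using h1
  -- the determinant fact for K, A, J on circle 1
  have detKAJ : (A - K) * (conj' J - conj' K) ≠ (conj' A - conj' K) * (J - K) :=
    l_det cK1 cA1 cJ1 hJK (Ne.symm hAJ) (conj_sub_ne hAK)
  -- a ≠ A
  have hnotaA : a ≠ A := by
    intro haA
    have cA2 : (A - O₂) * (conj' A - conj' O₂) = ((r₂ : ℂ))^2 := by
      rw [← haA]; exact ca2
    exact hO (l_center cK1 cA1 cJ1 cK2 cA2 cJ2 detKAJ)
  -- w is not real
  have hww : w - conj' w ≠ 0 := by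
    intro h0
    have hcw : conj' w = w := by linear_combination -h0
    obtain ⟨x, hx⟩ : ∃ x : ℝ, (x : ℂ) = w := ⟨w.re, Complex.conj_eq_iff_re.mp hcw⟩
    by_cases hw1 : w = 1
    · exact hnotaA (by linear_combination hwA + (A - J) * hw1)
    · by_cases htA1 : tA = (1 : ℝ)
      · apply hnotaA
        rw [ea, htA1]; push_cast; ring
      · have hx1 : (x : ℂ) - 1 ≠ 0 := by
          intro h1; apply hw1; rw [← hx]; linear_combination h1
        have hEq : ((x : ℂ) - 1) * (A - J) = ((tA : ℂ) - 1) * (A - K) := by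
          linear_combination ea - hwA + (A - J) * hx
        have hJK0 : (J - K) * ((x : ℂ) - 1) = ((x : ℂ) - (tA : ℂ)) * (A - K) := by
          linear_combination -hEq
        have hJK0' : (conj' J - conj' K) * ((x : ℂ) - 1)
            = ((x : ℂ) - (tA : ℂ)) * (conj' A - conj' K) := by
          have h1 := congrArg conj' hJK0
          simpa using h1
        apply detKAJ
        apply mul_right_cancel₀ hx1
        linear_combination (A - K) * hJK0' - (conj' A - conj' K) * hJK0
  have hw0 : w ≠ 0 := by
    intro h0; apply hww; rw [h0]; simp
  -- P2 parametrizations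
  have hCAs : C - A ≠ 0 := sub_ne_zero.mpr (Ne.symm hAC)
  have hBAs : B - A ≠ 0 := sub_ne_zero.mpr (Ne.symm hAB)
  obtain ⟨sP, hsP⟩ := collinear_param (Ne.symm hAC) h2.1
  have hsP' : conj' P2 = conj' C + (sP : ℂ) * (conj' A - conj' C) := by
    have h1 := congrArg conj' hsP; simpa using h1
  have hca : c ≠ a := by
    intro h0
    have hz : w * (C - A) = 0 := by linear_combination hwA - hwC + h0
    exact hw0 ((mul_eq_zero.mp hz).resolve_right hCAs)
  obtain ⟨uP, huP⟩ := collinear_param hca h2.2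
  have huP' : conj' P2 = conj' c + (uP : ℂ) * (conj' a - conj' c) := by
    have h1 := congrArg conj' huP; simpa using h1
  -- P3 parametrizations
  obtain ⟨sQ, hsQ⟩ := collinear_param hAB h3.1
  have hsQ' : conj' P3 = conj' A + (sQ : ℂ) * (conj' B - conj' A) := by
    have h1 := congrArg conj' hsQ; simpa using h1
  have hab : a ≠ b := by
    intro h0
    have hz : w * (B - A) = 0 := by linear_combination hwA - hwB - h0
    exact hw0 ((mul_eq_zero.mp hz).resolve_right hBAs)
  obtain ⟨uQ, huQ⟩ := collinear_param hab h3.2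
  have huQ' : conj' P3 = conj' a + (uQ : ℂ) * (conj' b - conj' a) := by
    have h1 := congrArg conj' huQ; simpa using h1
  -- KEY hypotheses for P2
  have k1 : P2 - J = w * (C - J) - (uP : ℂ) * (w * ((C - J) - (A - J))) := by
    linear_combination huP + hwC + (uP : ℂ) * (hwA - hwC)
  have k1' : conj' P2 - conj' J = conj' w * (conj' C - conj' J)
      - (uP : ℂ) * (conj' w * ((conj' C - conj' J) - (conj' A - conj' J))) := by
    linear_combination huP' + hwC' + (uP : ℂ) * (hwA' - hwC')
  have k2 : ((P2 - J) - (C - J)) * ((conj' A - conj' J) - (conj' C - conj' J))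
      = ((conj' P2 - conj' J) - (conj' C - conj' J)) * ((A - J) - (C - J)) := by
    linear_combination (conj' A - conj' C) * hsP - (A - C) * hsP'
  have hCA0 : (C - J) - (A - J) ≠ 0 := by
    intro h1; exact hCAs (by linear_combination h1)
  have hCA0' : (conj' C - conj' J) - (conj' A - conj' J) ≠ 0 := by
    intro h1; exact (conj_sub_ne (Ne.symm hAC)) (by linear_combination h1)
  have keyP2 := l_key hCA0 hCA0' hww k1 k1' k2
  -- KEY hypotheses for P3
  have k3 : P3 - J = w * (B - J) - ((1 - uQ : ℝ) : ℂ) * (w * ((B - J) - (A - J))) := by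
    push_cast
    linear_combination huQ + hwA + (uQ : ℂ) * (hwB - hwA)
  have k3' : conj' P3 - conj' J = conj' w * (conj' B - conj' J)
      - ((1 - uQ : ℝ) : ℂ) * (conj' w * ((conj' B - conj' J) - (conj' A - conj' J))) := by
    push_cast
    linear_combination huQ' + hwA' + (uQ : ℂ) * (hwB' - hwA')
  have k4 : ((P3 - J) - (B - J)) * ((conj' A - conj' J) - (conj' B - conj' J))
      = ((conj' P3 - conj' J) - (conj' B - conj' J)) * ((A - J) - (B - J)) := by
    linear_combination (conj' A - conj' B) * hsQ - (A - B) * hsQ'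
  have hBA0 : (B - J) - (A - J) ≠ 0 := by
    intro h1; exact hBAs (by linear_combination h1)
  have hBA0' : (conj' B - conj' J) - (conj' A - conj' J) ≠ 0 := by
    intro h1; exact (conj_sub_ne (Ne.symm hAB)) (by linear_combination h1)
  have keyP3 := l_key hBA0 hBA0' hww k3 k3' k4
  -- the point a on the circle
  have keya := l_circ3 (A := A - J) (A' := conj' A - conj' J) (w := w) (w' := conj' w) hww
  rw [← hwA, ← hwA'] at keya
  -- assemble
  set Oc : ℂ := J + (A - J) * w * (1 - conj' w) / (w - conj' w) with hOc
  have hOc' : conj' Oc = conj' J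
      + (conj' A - conj' J) * conj' w * (1 - w) / (conj' w - w) := by
    rw [hOc]
    simp only [map_add, map_div₀, map_mul, map_sub, map_one, Complex.conj_conj]
  have convert_eq : ∀ X : ℂ,
      ((X - J) - (A - J) * w * (1 - conj' w) / (w - conj' w)) *
        ((conj' X - conj' J) - (conj' A - conj' J) * conj' w * (1 - w) / (conj' w - w)) =
      ((A - J) - (A - J) * w * (1 - conj' w) / (w - conj' w)) *
        ((conj' A - conj' J) - (conj' A - conj' J) * conj' w * (1 - w) / (conj' w - w)) →
      (X - Oc) * (conj' X - conj' Oc) = (A - Oc) * (conj' A - conj' Oc) := by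
    intro X hX
    rw [hOc, hOc']
    linear_combination hX
  refine ⟨Oc, dist Oc A, rfl, ?_, ?_, ?_⟩
  · exact eq_to_dist (convert_eq a keya)
  · exact eq_to_dist (convert_eq P2 keyP2)
  · exact eq_to_dist (convert_eq P3 keyP3)
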